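/- arXiv:2203.00380 — 3 statements merged into one kernel-verified Lean document; each statement's English description precedes it below -/
import Mathlib

section
/- Let p > 1 and α < p - 1. Then for every measurable nonnegative function f on (0,∞), one has ∫₀^∞ ( (1/y) ∫₀^y f(t) dt )^p y^α dy ≤ ( p/(p−α−1) )^p ∫₀^∞ f(y)^p y^α dy. -/
open MeasureTheory Set

/-- lintegral of `t ^ r` on `Ioo 0 y` for `-1 < r`. -/
lemma hardy_aux_lintegral_Ioo {r y : ℝ} (hr : -1 < r) (hy : 0 < y) :
    ∫⁻ t in Ioo (0 : ℝ) y, ENNReal.ofReal (t ^ r)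
      = ENNReal.ofReal (y ^ (r + 1) / (r + 1)) := by
  have hint : IntegrableOn (fun t : ℝ => t ^ r) (Ioo 0 y) := by
    have h := intervalIntegral.intervalIntegrable_rpow' (a := 0) (b := y) hr
    rwa [intervalIntegrable_iff_integrableOn_Ioo_of_le hy.le] at h
  have hnn : 0 ≤ᵐ[volume.restrict (Ioo (0 : ℝ) y)] fun t : ℝ => t ^ r :=
    (ae_restrict_iff' measurableSet_Ioo).2
      (Filter.Eventually.of_forall fun t ht => Real.rpow_nonneg ht.1.le r)
  rw [← ofReal_integral_eq_lintegral_ofReal hint hnn]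
  congr 1
  rw [← integral_Ioc_eq_integral_Ioo, ← intervalIntegral.integral_of_le hy.le,
    integral_rpow (Or.inl hr), Real.zero_rpow (by linarith)]
  ring

/-- lintegral of `y ^ r` on `Ioi t` for `r < -1`, `0 < t`. -/
lemma hardy_aux_lintegral_Ioi {r t : ℝ} (hr : r < -1) (ht : 0 < t) :
    ∫⁻ y in Ioi t, ENNReal.ofReal (y ^ r)
      = ENNReal.ofReal (-t ^ (r + 1) / (r + 1)) := by
  have hint : IntegrableOn (fun y : ℝ => y ^ r) (Ioi t) :=
    integrableOn_Ioi_rpow_of_lt hr ht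
  have hnn : 0 ≤ᵐ[volume.restrict (Ioi t)] fun y : ℝ => y ^ r :=
    (ae_restrict_iff' measurableSet_Ioi).2
      (Filter.Eventually.of_forall fun y hy => Real.rpow_nonneg (ht.trans hy).le r)
  rw [← ofReal_integral_eq_lintegral_ofReal hint hnn, integral_Ioi_rpow_of_lt hr ht]

/-- Classical Hardy inequality on the half-line for averages of the initial integral,
with power weight `y ^ α`, `α < p - 1`. Both sides may be infinite. -/
theorem hardy_initial_inequality (p α : ℝ) (hp : 1 < p) (hα : α < p - 1)
    (f : ℝ → ENNReal) (hf : Measurable f) :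
    ∫⁻ y in Ioi (0 : ℝ),
        (ENNReal.ofReal (1 / y) * ∫⁻ t in Ioo (0 : ℝ) y, f t) ^ p * ENNReal.ofReal (y ^ α)
      ≤ ENNReal.ofReal ((p / (p - α - 1)) ^ p) *
        ∫⁻ y in Ioi (0 : ℝ), (f y) ^ p * ENNReal.ofReal (y ^ α) := by
  have hp0 : (0 : ℝ) < p := by linarith
  have hp1 : (0 : ℝ) < p - 1 := by linarith
  set q : ℝ := p / (p - 1) with hq_def
  have hpq : p.HolderConjugate q := Real.HolderConjugate.conjExponent hp
  set δ : ℝ := (p - 1 - α) / p with hδ_def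
  have hδ : 0 < δ := div_pos (by linarith) hp0
  set β : ℝ := α + δ with hβ_def
  -- key real identities
  have hβq : -(β / p) * q = δ - 1 := by
    rw [hq_def, hβ_def, hδ_def]
    field_simp
    ring
  have hqp : 1 / q * p = p - 1 := by
    rw [hq_def]; field_simp
  -- the weighted integrand on the right
  set g : ℝ → ENNReal := fun t => f t ^ p * ENNReal.ofReal (t ^ β) with hg_def
  have hg_meas : Measurable g :=
    (hf.pow measurable_const).mul ((measurable_id'.pow measurable_const).ennreal_ofReal)
  set I : ℝ → ENNReal := fun y => ∫⁻ t in Ioo (0 : ℝ) y, g t with hI_def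
  -- Step 1: pointwise estimate via Hölder, for y > 0
  have step1 : ∀ y ∈ Ioi (0 : ℝ),
      (ENNReal.ofReal (1 / y) * ∫⁻ t in Ioo (0 : ℝ) y, f t) ^ p * ENNReal.ofReal (y ^ α)
        ≤ ENNReal.ofReal (δ ^ (1 - p)) * (ENNReal.ofReal (y ^ (-1 - δ)) * I y) := by
    intro y hy
    rw [mem_Ioi] at hy
    -- Hölder inequality
    have hF : (∫⁻ t in Ioo (0 : ℝ) y, f t)
        ≤ I y ^ (1 / p) * ENNReal.ofReal (y ^ δ / δ) ^ (1 / q) := by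
      have heq : ∫⁻ t in Ioo (0 : ℝ) y, f t
          = ∫⁻ t in Ioo (0 : ℝ) y,
              ((fun t => f t * ENNReal.ofReal (t ^ (β / p))) *
                (fun t => ENNReal.ofReal (t ^ (-(β / p))))) t := by
        refine setLIntegral_congr_fun_ae measurableSet_Ioo
          (Filter.Eventually.of_forall fun t ht => ?_)
        simp only [Pi.mul_apply]
        rw [mul_assoc, ← ENNReal.ofReal_mul (Real.rpow_nonneg ht.1.le _),
          ← Real.rpow_add ht.1, add_neg_cancel, Real.rpow_zero, ENNReal.ofReal_one, mul_one]
      rw [heq]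
      refine (ENNReal.lintegral_mul_le_Lp_mul_Lq (volume.restrict (Ioo (0 : ℝ) y)) hpq
        ((hf.mul ((measurable_id'.pow measurable_const).ennreal_ofReal)).aemeasurable)
        (((measurable_id'.pow measurable_const).ennreal_ofReal).aemeasurable)).trans
        (le_of_eq ?_)
      congr 1
      · -- first factor equals `I y ^ (1 / p)`
        congr 1
        refine setLIntegral_congr_fun_ae measurableSet_Ioo
          (Filter.Eventually.of_forall fun t ht => ?_)
        simp only [Pi.mul_apply]
        rw [ENNReal.mul_rpow_of_nonneg _ _ hp0.le,
          ENNReal.ofReal_rpow_of_pos (Real.rpow_pos_of_pos ht.1 _),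
          ← Real.rpow_mul ht.1.le, div_mul_cancel₀ _ hp0.ne']
      · -- second factor equals `ENNReal.ofReal (y ^ δ / δ) ^ (1 / q)`
        have h2 : ∫⁻ t in Ioo (0 : ℝ) y, ENNReal.ofReal (t ^ (-(β / p))) ^ q
            = ENNReal.ofReal (y ^ δ / δ) := by
          have heq2 : ∫⁻ t in Ioo (0 : ℝ) y, ENNReal.ofReal (t ^ (-(β / p))) ^ q
              = ∫⁻ t in Ioo (0 : ℝ) y, ENNReal.ofReal (t ^ (δ - 1)) := by
            refine setLIntegral_congr_fun_ae measurableSet_Ioo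
              (Filter.Eventually.of_forall fun t ht => ?_)
            rw [ENNReal.ofReal_rpow_of_pos (Real.rpow_pos_of_pos ht.1 _),
              ← Real.rpow_mul ht.1.le, hβq]
          rw [heq2, hardy_aux_lintegral_Ioo (by linarith) hy, sub_add_cancel]
        rw [h2]
    -- raise to the `p`-th power and multiply by the weights
    have hyδ : 0 < y ^ δ / δ := div_pos (Real.rpow_pos_of_pos hy δ) hδ
    have hreal : (1 / y) ^ p * (y ^ δ / δ) ^ (p - 1) * y ^ α
        = δ ^ (1 - p) * y ^ (-1 - δ) := by
      have e1 : -p + (δ * (p - 1) + α) = -1 - δ := by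
        have : δ * p = p - 1 - α := by
          rw [hδ_def]; field_simp
        nlinarith [this]
      calc (1 / y) ^ p * (y ^ δ / δ) ^ (p - 1) * y ^ α
          = y ^ (-p) * ((y ^ δ) ^ (p - 1) / δ ^ (p - 1)) * y ^ α := by
            rw [one_div, Real.inv_rpow hy.le, ← Real.rpow_neg hy.le,
              Real.div_rpow (Real.rpow_nonneg hy.le _) hδ.le]
        _ = y ^ (-p) * (y ^ (δ * (p - 1)) * y ^ α) / δ ^ (p - 1) := by
            rw [← Real.rpow_mul hy.le]; ring
        _ = y ^ (-p + (δ * (p - 1) + α)) / δ ^ (p - 1) := by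
            rw [Real.rpow_add hy, Real.rpow_add hy]
        _ = δ ^ (1 - p) * y ^ (-1 - δ) := by
            rw [e1, div_eq_mul_inv, ← Real.rpow_neg hδ.le,
              (show -(p - 1) = 1 - p by ring), mul_comm]
    calc (ENNReal.ofReal (1 / y) * ∫⁻ t in Ioo (0 : ℝ) y, f t) ^ p * ENNReal.ofReal (y ^ α)
        ≤ (ENNReal.ofReal (1 / y) *
            (I y ^ (1 / p) * ENNReal.ofReal (y ^ δ / δ) ^ (1 / q))) ^ p *
            ENNReal.ofReal (y ^ α) := by
          gcongr
      _ = I y * (ENNReal.ofReal ((1 / y) ^ p) * ENNReal.ofReal ((y ^ δ / δ) ^ (p - 1)) *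
            ENNReal.ofReal (y ^ α)) := by
          rw [ENNReal.mul_rpow_of_nonneg _ _ hp0.le, ENNReal.mul_rpow_of_nonneg _ _ hp0.le,
            ← ENNReal.rpow_mul (I y), one_div p, inv_mul_cancel₀ hp0.ne', ENNReal.rpow_one,
            ← ENNReal.rpow_mul, hqp, ENNReal.ofReal_rpow_of_pos hyδ,
            ENNReal.ofReal_rpow_of_pos (by positivity : (0:ℝ) < 1 / y)]
          ring
      _ = I y * ENNReal.ofReal ((1 / y) ^ p * (y ^ δ / δ) ^ (p - 1) * y ^ α) := by
          rw [ENNReal.ofReal_mul (by positivity), ENNReal.ofReal_mul (by positivity)]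
      _ = ENNReal.ofReal (δ ^ (1 - p)) * (ENNReal.ofReal (y ^ (-1 - δ)) * I y) := by
          rw [hreal, ENNReal.ofReal_mul (Real.rpow_nonneg hδ.le _)]
          ring
  -- Step 2: integrate the pointwise bound
  refine le_trans (setLIntegral_mono' measurableSet_Ioi step1) ?_
  rw [lintegral_const_mul' _ _ ENNReal.ofReal_ne_top]
  -- Step 3: Tonelli
  set F : ℝ → ℝ → ENNReal := fun y t =>
    {q : ℝ × ℝ | q.2 < q.1}.indicator
      (fun q => ENNReal.ofReal (q.1 ^ (-1 - δ)) * g q.2) (y, t) with hF_def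
  have hF_meas : Measurable (Function.uncurry F) := by
    have : Function.uncurry F = {q : ℝ × ℝ | q.2 < q.1}.indicator
        (fun q => ENNReal.ofReal (q.1 ^ (-1 - δ)) * g q.2) := by
      ext ⟨y, t⟩; rfl
    rw [this]
    exact Measurable.indicator
      (((measurable_fst.pow measurable_const).ennreal_ofReal).mul
        (hg_meas.comp measurable_snd))
      (measurableSet_lt measurable_snd measurable_fst)
  have hswap : ∫⁻ y in Ioi (0 : ℝ), ∫⁻ t in Ioi (0 : ℝ), F y t
      = ∫⁻ t in Ioi (0 : ℝ), ∫⁻ y in Ioi (0 : ℝ), F y t :=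
    lintegral_lintegral_swap hF_meas.aemeasurable
  have hleft : ∫⁻ y in Ioi (0 : ℝ), ENNReal.ofReal (y ^ (-1 - δ)) * I y
      = ∫⁻ y in Ioi (0 : ℝ), ∫⁻ t in Ioi (0 : ℝ), F y t := by
    refine setLIntegral_congr_fun_ae measurableSet_Ioi
      (Filter.Eventually.of_forall fun y hy => ?_)
    rw [mem_Ioi] at hy
    have hFy : ∀ t : ℝ, F y t =
        (Iio y).indicator (fun t => ENNReal.ofReal (y ^ (-1 - δ)) * g t) t := by
      intro t
      by_cases h : t < y <;>
        simp [hF_def, Set.indicator_apply, h]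
    simp_rw [hFy]
    rw [lintegral_indicator measurableSet_Iio,
      Measure.restrict_restrict measurableSet_Iio, Set.Iio_inter_Ioi,
      lintegral_const_mul' _ _ ENNReal.ofReal_ne_top]
  have hright : ∫⁻ t in Ioi (0 : ℝ), ∫⁻ y in Ioi (0 : ℝ), F y t
      = ∫⁻ t in Ioi (0 : ℝ), ENNReal.ofReal (1 / δ) * (f t ^ p * ENNReal.ofReal (t ^ α)) := by
    refine setLIntegral_congr_fun_ae measurableSet_Ioi
      (Filter.Eventually.of_forall fun t ht => ?_)
    rw [mem_Ioi] at ht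
    have hFt : ∀ y : ℝ, F y t =
        (Ioi t).indicator (fun y => ENNReal.ofReal (y ^ (-1 - δ)) * g t) y := by
      intro y
      by_cases h : t < y <;>
        simp [hF_def, Set.indicator_apply, h, Set.mem_Ioi]
    simp_rw [hFt]
    rw [lintegral_indicator measurableSet_Ioi,
      Measure.restrict_restrict measurableSet_Ioi,
      (show Ioi t ∩ Ioi (0 : ℝ) = Ioi t by
        rw [Set.Ioi_inter_Ioi, max_eq_left ht.le]),
      lintegral_mul_const'' _ ((measurable_id'.pow measurable_const).ennreal_ofReal).aemeasurable,
      hardy_aux_lintegral_Ioi (by linarith) ht]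
    have e2 : (-1 - δ + 1) = -δ := by ring
    rw [e2]
    have e3 : -t ^ (-δ) / (-δ) = t ^ (-δ) / δ := neg_div_neg_eq _ _
    rw [e3, hg_def]
    have e4 : ENNReal.ofReal (t ^ β) * ENNReal.ofReal (t ^ (-δ) / δ)
        = ENNReal.ofReal (1 / δ) * ENNReal.ofReal (t ^ α) := by
      rw [← ENNReal.ofReal_mul (Real.rpow_nonneg ht.le _),
        ← ENNReal.ofReal_mul (by positivity)]
      congr 1
      rw [div_eq_mul_inv, ← mul_assoc, ← Real.rpow_add ht,
        (show β + -δ = α by rw [hβ_def]; ring), one_div]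
      ring
    calc ENNReal.ofReal (t ^ (-δ) / δ) * (f t ^ p * ENNReal.ofReal (t ^ β))
        = f t ^ p * (ENNReal.ofReal (t ^ β) * ENNReal.ofReal (t ^ (-δ) / δ)) := by ring
      _ = ENNReal.ofReal (1 / δ) * (f t ^ p * ENNReal.ofReal (t ^ α)) := by
          rw [e4]; ring
  rw [hleft, hswap, hright, lintegral_const_mul' _ _ ENNReal.ofReal_ne_top,
    ← mul_assoc, ← ENNReal.ofReal_mul (Real.rpow_nonneg hδ.le _)]
  have e5 : δ ^ (1 - p) * (1 / δ) = (p / (p - α - 1)) ^ p := by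
    have h1 : (1 : ℝ) / δ = δ ^ (-1 : ℝ) := by
      rw [Real.rpow_neg_one, one_div]
    have h2 : p / (p - α - 1) = δ⁻¹ := by
      rw [hδ_def]
      rw [(show p - α - 1 = p - 1 - α by ring)]
      field_simp
    rw [h1, ← Real.rpow_add hδ, (show 1 - p + -1 = -p by ring), h2,
      Real.inv_rpow hδ.le, ← Real.rpow_neg hδ.le]
  rw [e5]
end

section
/- Fix σ with 0 ≤ σ < 1/2 and let e_σ : [0,∞) → ℝ satisfy ‖e_σ‖_{L^∞} + ‖z e_σ'‖_{L^∞} ≤ 2σ. For r > 0 define, on X = H¹₀(0,r) × H¹₀(0,r), the bilinear form B[(φ,ψ),(φ₁,ψ₁)] = ∫₀^r [φ'φ₁' − (z/2)φ'φ₁ + (z/2)e_σ ψ'φ₁] + ∫₀^r [ψ'ψ₁' − (z/2)ψ'ψ₁ + (z/2)e_σ φ'ψ₁]. Then B is coercive: there exists a constant c > 0, depending only on σ, such that B[(φ,ψ),(φ,ψ)] ≥ c (‖φ‖²_{H¹} + ‖ψ‖²_{H¹}) for all (φ,ψ) ∈ X, provided σ is sufficiently small. -/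
open Set intervalIntegral MeasureTheory

private lemma cont_of_deriv {f f' : ℝ → ℝ} (hf : ∀ z, HasDerivAt f (f' z) z) :
    Continuous f :=
  continuous_iff_continuousAt.2 fun z => (hf z).continuousAt

/-- ∫ z φ' φ = −(1/2)∫ φ² when φ vanishes at the endpoints. -/
private lemma parts_sq (r : ℝ) (φ φ' : ℝ → ℝ)
    (hφ : ∀ z, HasDerivAt φ (φ' z) z) (hφ'c : Continuous φ')
    (hφ0 : φ 0 = 0) (hφr : φ r = 0) :
    ∫ z in (0:ℝ)..r, z * (φ' z * φ z) = -(1/2) * ∫ z in (0:ℝ)..r, φ z ^ 2 := by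
  have hφc : Continuous φ := cont_of_deriv hφ
  have key := intervalIntegral.integral_mul_deriv_eq_deriv_mul
    (a := 0) (b := r)
    (u := fun z => z) (v := fun z => φ z * φ z) (u' := fun _ => (1:ℝ))
    (v' := fun z => φ' z * φ z + φ z * φ' z)
    (fun x _ => hasDerivAt_id x)
    (fun x _ => (hφ x).mul (hφ x))
    intervalIntegrable_const
    (((hφ'c.mul hφc).add (hφc.mul hφ'c)).intervalIntegrable 0 r)
  have l1 : ∫ x in (0:ℝ)..r, x * (φ' x * φ x + φ x * φ' x)
      = 2 * ∫ z in (0:ℝ)..r, z * (φ' z * φ z) := by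
    rw [← intervalIntegral.integral_const_mul]
    apply intervalIntegral.integral_congr
    intro x _; ring
  have l2 : ∫ x in (0:ℝ)..r, (1:ℝ) * (φ x * φ x) = ∫ z in (0:ℝ)..r, φ z ^ 2 := by
    apply intervalIntegral.integral_congr
    intro x _; ring
  rw [l1, l2] at key
  simp only [hφr, hφ0, mul_zero, zero_mul, sub_zero, zero_sub, sub_self] at key
  linarith

private lemma u'_bound {σ z : ℝ} {eσ eσ' : ℝ → ℝ}
    (h : |eσ z| + |z * eσ' z| ≤ 2 * σ) :
    |1/2 * eσ z + z/2 * eσ' z| ≤ σ := by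
  have h1 : |1/2 * eσ z + z/2 * eσ' z| ≤ |1/2 * eσ z| + |z/2 * eσ' z| := abs_add_le _ _
  have h2 : |1/2 * eσ z| = 1/2 * |eσ z| := by rw [abs_mul]; norm_num
  have h3 : |z/2 * eσ' z| = 1/2 * |z * eσ' z| := by
    rw [show z/2 * eσ' z = 1/2 * (z * eσ' z) by ring, abs_mul]; norm_num
  linarith

/-- integrability of (z/2 eσ)' = eσ/2 + z eσ'/2 on [0,r]. -/
private lemma u'_intInt (σ r : ℝ) (hr : 0 < r) (eσ eσ' : ℝ → ℝ)
    (heσ : ∀ z, HasDerivAt eσ (eσ' z) z)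
    (hbd : ∀ z ∈ Icc (0:ℝ) r, |eσ z| + |z * eσ' z| ≤ 2 * σ) :
    IntervalIntegrable (fun z => 1/2 * eσ z + z/2 * eσ' z) volume 0 r := by
  have heσc : Continuous eσ := cont_of_deriv heσ
  have hderiv : eσ' = deriv eσ := funext fun z => ((heσ z).deriv).symm
  have hm : Measurable fun z => 1/2 * eσ z + z/2 * eσ' z := by
    rw [hderiv]
    exact (measurable_const.mul heσc.measurable).add
      ((measurable_id.div_const 2).mul (measurable_deriv eσ))
  rw [intervalIntegrable_iff]
  apply Measure.integrableOn_of_bounded (M := σ)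
  · rw [uIoc_of_le hr.le]
    exact (measure_Ioc_lt_top).ne
  · exact hm.aestronglyMeasurable
  · rw [ae_restrict_iff' measurableSet_uIoc]
    filter_upwards with z hz
    rw [uIoc_of_le hr.le] at hz
    have hz' : z ∈ Icc (0:ℝ) r := Ioc_subset_Icc_self hz
    rw [Real.norm_eq_abs]
    exact u'_bound (hbd z hz')

/-- Integration by parts for the cross term. -/
private lemma parts_cross (σ r : ℝ) (hr : 0 < r) (eσ eσ' : ℝ → ℝ)
    (heσ : ∀ z, HasDerivAt eσ (eσ' z) z)
    (hbd : ∀ z ∈ Icc (0:ℝ) r, |eσ z| + |z * eσ' z| ≤ 2 * σ)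
    (φ φ' ψ ψ' : ℝ → ℝ)
    (hφ : ∀ z, HasDerivAt φ (φ' z) z) (hφ'c : Continuous φ')
    (hψ : ∀ z, HasDerivAt ψ (ψ' z) z) (hψ'c : Continuous ψ')
    (hφ0 : φ 0 = 0) (hφr : φ r = 0) :
    ∫ z in (0:ℝ)..r, (z/2 * eσ z) * (φ' z * ψ z + φ z * ψ' z)
      = - ∫ z in (0:ℝ)..r, (1/2 * eσ z + z/2 * eσ' z) * (φ z * ψ z) := by
  have hφc : Continuous φ := cont_of_deriv hφ
  have hψc : Continuous ψ := cont_of_deriv hψ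
  have heσc : Continuous eσ := cont_of_deriv heσ
  have key := intervalIntegral.integral_mul_deriv_eq_deriv_mul
    (a := 0) (b := r)
    (u := fun z => z/2 * eσ z) (v := fun z => φ z * ψ z)
    (u' := fun z => 1/2 * eσ z + z/2 * eσ' z)
    (v' := fun z => φ' z * ψ z + φ z * ψ' z)
    (fun x _ => by
      have h1 : HasDerivAt (fun z : ℝ => z/2) (1/2) x := by
        simpa using (hasDerivAt_id x).div_const 2
      exact h1.mul (heσ x))
    (fun x _ => (hφ x).mul (hψ x))
    (u'_intInt σ r hr eσ eσ' heσ hbd)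
    (((hφ'c.mul hψc).add (hφc.mul hψ'c)).intervalIntegrable 0 r)
  simpa [hφ0, hφr] using key

/-- Splitting a sum of three continuous functions. -/
private lemma int_split3 (r : ℝ) (f g h : ℝ → ℝ)
    (hf : Continuous f) (hg : Continuous g) (hh : Continuous h) :
    ∫ z in (0:ℝ)..r, (f z + g z + h z)
      = (∫ z in (0:ℝ)..r, f z) + (∫ z in (0:ℝ)..r, g z) + ∫ z in (0:ℝ)..r, h z := by
  rw [intervalIntegral.integral_add (f := fun z => f z + g z) ((hf.add hg).intervalIntegrable 0 r)
      (hh.intervalIntegrable 0 r),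
    intervalIntegral.integral_add (hf.intervalIntegrable 0 r) (hg.intervalIntegrable 0 r)]

/-- Coercivity of the linearized self-similar bilinear form: for `σ` sufficiently small
there is `c = c(σ) > 0` such that for every `r > 0`, every `e_σ` with
`|e_σ(z)| + |z e_σ'(z)| ≤ 2σ` on `[0,r]`, and every pair `(φ,ψ)` vanishing at `0` and `r`,
`B[(φ,ψ),(φ,ψ)] ≥ c (‖φ‖²_{H¹} + ‖ψ‖²_{H¹})`. -/
theorem bilinear_form_coercive :
    ∃ σ₀ : ℝ, 0 < σ₀ ∧ ∀ σ : ℝ, 0 ≤ σ → σ < σ₀ →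
      ∃ c : ℝ, 0 < c ∧ ∀ r : ℝ, 0 < r →
        ∀ eσ eσ' : ℝ → ℝ,
          (∀ z : ℝ, HasDerivAt eσ (eσ' z) z) →
          (∀ z ∈ Icc (0 : ℝ) r, |eσ z| + |z * eσ' z| ≤ 2 * σ) →
          ∀ φ φ' ψ ψ' : ℝ → ℝ,
            (∀ z : ℝ, HasDerivAt φ (φ' z) z) → Continuous φ' →
            (∀ z : ℝ, HasDerivAt ψ (ψ' z) z) → Continuous ψ' →
            φ 0 = 0 → φ r = 0 → ψ 0 = 0 → ψ r = 0 →
            c * ∫ z in (0 : ℝ)..r, (φ z ^ 2 + φ' z ^ 2 + ψ z ^ 2 + ψ' z ^ 2) ≤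
              (∫ z in (0 : ℝ)..r,
                (φ' z ^ 2 - z / 2 * φ' z * φ z + z / 2 * eσ z * ψ' z * φ z)) +
              ∫ z in (0 : ℝ)..r,
                (ψ' z ^ 2 - z / 2 * ψ' z * ψ z + z / 2 * eσ z * φ' z * ψ z) := by
  refine ⟨1/4, by norm_num, fun σ hσ0 hσ => ⟨1/4 - σ/2, by linarith, ?_⟩⟩
  intro r hr eσ eσ' heσ hbd φ φ' ψ ψ' hφ hφ'c hψ hψ'c hφ0 hφr hψ0 hψr
  have hφc : Continuous φ := cont_of_deriv hφ
  have hψc : Continuous ψ := cont_of_deriv hψ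
  have heσc : Continuous eσ := cont_of_deriv heσ
  -- basic continuity facts
  have hc_zφ : Continuous (fun z => -(1/2) * (z * (φ' z * φ z))) := by fun_prop
  have hc_zψ : Continuous (fun z => -(1/2) * (z * (ψ' z * ψ z))) := by fun_prop
  have hc_c1 : Continuous (fun z => (z/2 * eσ z) * (ψ' z * φ z)) := by fun_prop
  have hc_c2 : Continuous (fun z => (z/2 * eσ z) * (φ' z * ψ z)) := by fun_prop
  -- split the first integral
  have d1 : (∫ z in (0:ℝ)..r, (φ' z ^ 2 - z / 2 * φ' z * φ z + z / 2 * eσ z * ψ' z * φ z))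
      = (∫ z in (0:ℝ)..r, φ' z ^ 2)
        + (∫ z in (0:ℝ)..r, -(1/2) * (z * (φ' z * φ z)))
        + ∫ z in (0:ℝ)..r, (z/2 * eσ z) * (ψ' z * φ z) := by
    rw [← int_split3 r (fun z => φ' z ^ 2) _ _ (hφ'c.pow 2) hc_zφ hc_c1]
    apply intervalIntegral.integral_congr
    intro z _; ring
  have d2 : (∫ z in (0:ℝ)..r, (ψ' z ^ 2 - z / 2 * ψ' z * ψ z + z / 2 * eσ z * φ' z * ψ z))
      = (∫ z in (0:ℝ)..r, ψ' z ^ 2)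
        + (∫ z in (0:ℝ)..r, -(1/2) * (z * (ψ' z * ψ z)))
        + ∫ z in (0:ℝ)..r, (z/2 * eσ z) * (φ' z * ψ z) := by
    rw [← int_split3 r (fun z => ψ' z ^ 2) _ _ (hψ'c.pow 2) hc_zψ hc_c2]
    apply intervalIntegral.integral_congr
    intro z _; ring
  -- the z φ' φ terms via integration by parts
  have p1 : ∫ z in (0:ℝ)..r, -(1/2) * (z * (φ' z * φ z))
      = (1/4) * ∫ z in (0:ℝ)..r, φ z ^ 2 := by
    rw [intervalIntegral.integral_const_mul, parts_sq r φ φ' hφ hφ'c hφ0 hφr]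
    ring
  have p2 : ∫ z in (0:ℝ)..r, -(1/2) * (z * (ψ' z * ψ z))
      = (1/4) * ∫ z in (0:ℝ)..r, ψ z ^ 2 := by
    rw [intervalIntegral.integral_const_mul, parts_sq r ψ ψ' hψ hψ'c hψ0 hψr]
    ring
  -- combine the two cross terms
  have dcross : (∫ z in (0:ℝ)..r, (z/2 * eσ z) * (ψ' z * φ z))
      + (∫ z in (0:ℝ)..r, (z/2 * eσ z) * (φ' z * ψ z))
      = ∫ z in (0:ℝ)..r, (z/2 * eσ z) * (φ' z * ψ z + φ z * ψ' z) := by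
    rw [← intervalIntegral.integral_add (hc_c1.intervalIntegrable 0 r)
        (hc_c2.intervalIntegrable 0 r)]
    apply intervalIntegral.integral_congr
    intro z _; ring
  have pcross := parts_cross σ r hr eσ eσ' heσ hbd φ φ' ψ ψ' hφ hφ'c hψ hψ'c hφ0 hφr
  -- bound the cross term
  have hint : IntervalIntegrable (fun z => (1/2 * eσ z + z/2 * eσ' z) * (φ z * ψ z)) volume 0 r :=
    (u'_intInt σ r hr eσ eσ' heσ hbd).mul_continuousOn (hφc.mul hψc).continuousOn
  have Tle : ∫ z in (0:ℝ)..r, (1/2 * eσ z + z/2 * eσ' z) * (φ z * ψ z)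
      ≤ ∫ z in (0:ℝ)..r, σ/2 * (φ z ^ 2 + ψ z ^ 2) := by
    apply intervalIntegral.integral_mono_on hr.le hint
      ((by fun_prop : Continuous (fun z => σ/2 * (φ z ^ 2 + ψ z ^ 2))).intervalIntegrable 0 r)
    intro z hz
    have h1 : |1/2 * eσ z + z/2 * eσ' z| ≤ σ := u'_bound (hbd z hz)
    have h2 : |φ z * ψ z| ≤ (φ z ^ 2 + ψ z ^ 2) / 2 := by
      rw [abs_mul]
      nlinarith [sq_nonneg (|φ z| - |ψ z|), sq_abs (φ z), sq_abs (ψ z)]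
    calc (1/2 * eσ z + z/2 * eσ' z) * (φ z * ψ z)
        ≤ |(1/2 * eσ z + z/2 * eσ' z) * (φ z * ψ z)| := le_abs_self _
      _ = |1/2 * eσ z + z/2 * eσ' z| * |φ z * ψ z| := abs_mul _ _
      _ ≤ σ * ((φ z ^ 2 + ψ z ^ 2) / 2) := mul_le_mul h1 h2 (abs_nonneg _) hσ0
      _ = σ/2 * (φ z ^ 2 + ψ z ^ 2) := by ring
  have Tval : ∫ z in (0:ℝ)..r, σ/2 * (φ z ^ 2 + ψ z ^ 2)
      = σ/2 * ((∫ z in (0:ℝ)..r, φ z ^ 2) + ∫ z in (0:ℝ)..r, ψ z ^ 2) := by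
    rw [intervalIntegral.integral_const_mul,
      intervalIntegral.integral_add (f := fun z => φ z ^ 2) (g := fun z => ψ z ^ 2) ((hφc.pow 2).intervalIntegrable 0 r)
        ((hψc.pow 2).intervalIntegrable 0 r)]
  -- split the LHS
  have dL : (∫ z in (0:ℝ)..r, (φ z ^ 2 + φ' z ^ 2 + ψ z ^ 2 + ψ' z ^ 2))
      = (∫ z in (0:ℝ)..r, φ z ^ 2) + (∫ z in (0:ℝ)..r, φ' z ^ 2)
        + (∫ z in (0:ℝ)..r, ψ z ^ 2) + ∫ z in (0:ℝ)..r, ψ' z ^ 2 := by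
    rw [intervalIntegral.integral_add (f := fun z => φ z ^ 2 + φ' z ^ 2 + ψ z ^ 2) (g := fun z => ψ' z ^ 2) (((hφc.pow 2).add (hφ'c.pow 2)).add
        ((hψc.pow 2)) |>.intervalIntegrable 0 r) ((hψ'c.pow 2).intervalIntegrable 0 r),
      intervalIntegral.integral_add (f := fun z => φ z ^ 2 + φ' z ^ 2) (g := fun z => ψ z ^ 2) (((hφc.pow 2).add (hφ'c.pow 2)).intervalIntegrable 0 r)
        ((hψc.pow 2).intervalIntegrable 0 r),
      intervalIntegral.integral_add (f := fun z => φ z ^ 2) (g := fun z => φ' z ^ 2) ((hφc.pow 2).intervalIntegrable 0 r)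
        ((hφ'c.pow 2).intervalIntegrable 0 r)]
  -- nonnegativity of derivative terms
  have hA1 : 0 ≤ ∫ z in (0:ℝ)..r, φ' z ^ 2 :=
    intervalIntegral.integral_nonneg hr.le fun x _ => sq_nonneg _
  have hA2 : 0 ≤ ∫ z in (0:ℝ)..r, ψ' z ^ 2 :=
    intervalIntegral.integral_nonneg hr.le fun x _ => sq_nonneg _
  have hP1 : 0 ≤ ∫ z in (0:ℝ)..r, φ z ^ 2 :=
    intervalIntegral.integral_nonneg hr.le fun x _ => sq_nonneg _
  have hP2 : 0 ≤ ∫ z in (0:ℝ)..r, ψ z ^ 2 :=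
    intervalIntegral.integral_nonneg hr.le fun x _ => sq_nonneg _
  rw [d1, d2, p1, p2, dL]
  have : (∫ z in (0:ℝ)..r, (z/2 * eσ z) * (ψ' z * φ z))
      + (∫ z in (0:ℝ)..r, (z/2 * eσ z) * (φ' z * ψ z))
      = - ∫ z in (0:ℝ)..r, (1/2 * eσ z + z/2 * eσ' z) * (φ z * ψ z) := by
    rw [dcross, pcross]
  rw [Tval] at Tle
  nlinarith [Tle, hA1, hA2, hP1, hP2, this]
end

section
/- Let v : [0,∞) → ℝ be absolutely continuous with v(0) = 0, and let 0 < κ < 1/2. Suppose y^{1/2−κ} v'(y) and y^{1/2+κ} v'(y) are in L²(0,∞). Then v ∈ L^∞(0,∞) and ‖v‖²_{L^∞} ≤ C(κ) ‖ y^{1/2−κ} v' ‖_{L²(0,∞)} ‖ y^{1/2+κ} v' ‖_{L²(0,∞)}. -/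
open MeasureTheory Set


lemma l2_cs {μ : Measure ℝ} {F G : ℝ → ℝ} (hF : MemLp F 2 μ) (hG : MemLp G 2 μ)
    (hFn : 0 ≤ᵐ[μ] F) (hGn : 0 ≤ᵐ[μ] G) :
    ∫ t, F t * G t ∂μ ≤ Real.sqrt (∫ t, F t ^ 2 ∂μ) * Real.sqrt (∫ t, G t ^ 2 ∂μ) := by
  have hconj : Real.HolderConjugate 2 2 := Real.HolderConjugate.two_two
  have h2 : ENNReal.ofReal (2:ℝ) = 2 := by norm_num
  have := MeasureTheory.integral_mul_le_Lp_mul_Lq_of_nonneg hconj hFn hGn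
    (by rw [h2]; exact hF) (by rw [h2]; exact hG)
  have e1 : ∀ x : ℝ, x ^ (2:ℝ) = x ^ (2:ℕ) := fun x => by
    rw [← Real.rpow_natCast x 2]; norm_num
  simp only [e1] at this
  calc ∫ t, F t * G t ∂μ ≤ (∫ a, F a ^ (2:ℕ) ∂μ) ^ ((1:ℝ)/2) * (∫ a, G a ^ (2:ℕ) ∂μ) ^ ((1:ℝ)/2) := this
    _ = _ := by rw [← Real.sqrt_eq_rpow, ← Real.sqrt_eq_rpow]

lemma int_mul {μ : Measure ℝ} {F G : ℝ → ℝ} (hF : MemLp F 2 μ) (hG : MemLp G 2 μ) :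
    Integrable (fun t => F t * G t) μ := by
  refine Integrable.mono' ((hF.integrable_sq).add (hG.integrable_sq))
    (hF.aestronglyMeasurable.mul hG.aestronglyMeasurable) ?_
  filter_upwards with t
  rw [Real.norm_eq_abs, abs_mul]
  have h : ((fun x => F x ^ 2) + fun x => G x ^ 2) t = F t ^ 2 + G t ^ 2 := rfl
  rw [h]
  nlinarith [sq_nonneg (|F t| - |G t|), sq_abs (F t), sq_abs (G t), abs_nonneg (F t), abs_nonneg (G t)]

/-- Cauchy-Schwarz splitting of `∫_s |v'|` with weight `t^e`. -/
lemma piece {s : Set ℝ} (hs : MeasurableSet s) (hsub : s ⊆ Ioi 0) (e : ℝ) {v' : ℝ → ℝ}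
    (hw : MemLp (fun t => t ^ (-e)) 2 (volume.restrict s))
    (hf : MemLp (fun t => t ^ e * v' t) 2 (volume.restrict s)) :
    IntegrableOn (fun t => |v' t|) s volume ∧
    ∫ t in s, |v' t| ≤ Real.sqrt (∫ t in s, (t ^ (-e)) ^ 2) *
      Real.sqrt (∫ t in s, (t ^ e * v' t) ^ 2) := by
  set F : ℝ → ℝ := fun t => t ^ (-e)
  set G : ℝ → ℝ := fun t => |t ^ e * v' t|
  have hG : MemLp G 2 (volume.restrict s) := by
    have := hf.norm
    simp only [Real.norm_eq_abs] at this
    exact this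
  have hkey : ∀ t ∈ s, |v' t| = F t * G t := by
    intro t ht
    have ht0 : (0:ℝ) < t := hsub ht
    have hpos : (0:ℝ) < t ^ e := Real.rpow_pos_of_pos ht0 e
    simp only [F, G, abs_mul, abs_of_pos hpos, Real.rpow_neg ht0.le]
    field_simp
  have haes : ∀ᵐ t ∂(volume.restrict s), |v' t| = F t * G t := by
    filter_upwards [ae_restrict_mem hs] with t ht using hkey t ht
  have hint : Integrable (fun t => F t * G t) (volume.restrict s) := int_mul hw hG
  constructor
  · exact hint.congr (Filter.EventuallyEq.symm haes)
  · have h1 : ∫ t in s, |v' t| = ∫ t in s, F t * G t := integral_congr_ae haes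
    have h2 : (∫ t in s, G t ^ 2) = ∫ t in s, (t ^ e * v' t) ^ 2 := by
      refine integral_congr_ae (Filter.Eventually.of_forall fun t => ?_)
      simp only [G, sq_abs]
    rw [h1, ← h2]
    refine l2_cs hw hG ?_ ?_
    · filter_upwards [ae_restrict_mem hs] with t ht
      exact Real.rpow_nonneg (le_of_lt (hsub ht)) _
    · filter_upwards with t using abs_nonneg _

lemma w1 {κ T : ℝ} (hκ0 : 0 < κ) (hκ : κ < 1/2) (hT : 0 < T) :
    ∫ t in Ioc (0:ℝ) T, ((t:ℝ) ^ (-((1:ℝ)/2 - κ))) ^ 2 = T ^ (2*κ) / (2*κ) := by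
  have hcong : ∀ t ∈ Ioc (0:ℝ) T, ((t:ℝ) ^ (-((1:ℝ)/2 - κ))) ^ 2 = t ^ (-(1-2*κ)) := by
    intro t ht
    rw [← Real.rpow_natCast (t ^ (-((1:ℝ)/2-κ))) 2, ← Real.rpow_mul ht.1.le]
    norm_num
    ring_nf
  rw [setIntegral_congr_fun measurableSet_Ioc hcong,
    ← intervalIntegral.integral_of_le hT.le,
    integral_rpow (Or.inl (by linarith))]
  rw [Real.zero_rpow (by linarith)]
  ring_nf

lemma w2 {κ T : ℝ} (hκ0 : 0 < κ) (hT : 0 < T) :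
    ∫ t in Ioi T, ((t:ℝ) ^ (-((1:ℝ)/2 + κ))) ^ 2 = T ^ (-(2*κ)) / (2*κ) := by
  have hcong : ∀ t ∈ Ioi T, ((t:ℝ) ^ (-((1:ℝ)/2 + κ))) ^ 2 = t ^ (-(1+2*κ)) := by
    intro t ht
    have ht0 : (0:ℝ) < t := hT.trans ht
    rw [← Real.rpow_natCast (t ^ (-((1:ℝ)/2+κ))) 2, ← Real.rpow_mul ht0.le]
    norm_num
    ring_nf
  rw [setIntegral_congr_fun measurableSet_Ioi hcong,
    integral_Ioi_rpow_of_lt (by linarith) hT]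
  have : -(1+2*κ) + 1 = -(2*κ) := by ring
  rw [this]
  field_simp

lemma wcont {e : ℝ} {s : Set ℝ} (hs : MeasurableSet s) (hsub : s ⊆ Ioi 0) :
    AEStronglyMeasurable (fun t : ℝ => t ^ e) (volume.restrict s) := by
  refine ContinuousOn.aestronglyMeasurable ?_ hs
  intro t ht
  exact (Real.continuousAt_rpow_const t e (Or.inl (ne_of_gt (hsub ht)))).continuousWithinAt

lemma wmem1 {κ T : ℝ} (hκ0 : 0 < κ) (hκ : κ < 1/2) (hT : 0 < T) :
    MemLp (fun t : ℝ => t ^ (-((1:ℝ)/2 - κ))) 2 (volume.restrict (Ioc 0 T)) := by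
  rw [memLp_two_iff_integrable_sq (wcont measurableSet_Ioc Ioc_subset_Ioi_self)]
  have h1 : IntegrableOn (fun t : ℝ => t ^ (-(1-2*κ))) (Ioc 0 T) volume :=
    (intervalIntegral.intervalIntegrable_rpow' (by linarith)).1
  refine (h1.congr_fun ?_ measurableSet_Ioc)
  intro t ht
  show t ^ (-(1-2*κ)) = (t ^ (-((1:ℝ)/2-κ))) ^ 2
  rw [← Real.rpow_natCast (t ^ (-((1:ℝ)/2-κ))) 2, ← Real.rpow_mul ht.1.le]
  norm_num; ring_nf

lemma wmem2 {κ T : ℝ} (hκ0 : 0 < κ) (hT : 0 < T) :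
    MemLp (fun t : ℝ => t ^ (-((1:ℝ)/2 + κ))) 2 (volume.restrict (Ioi T)) := by
  rw [memLp_two_iff_integrable_sq (wcont measurableSet_Ioi (Ioi_subset_Ioi hT.le))]
  have h1 : IntegrableOn (fun t : ℝ => t ^ (-(1+2*κ))) (Ioi T) volume :=
    integrableOn_Ioi_rpow_of_lt (by linarith) hT
  refine (h1.congr_fun ?_ measurableSet_Ioi)
  intro t ht
  have ht0 : (0:ℝ) < t := hT.trans ht
  show t ^ (-(1+2*κ)) = (t ^ (-((1:ℝ)/2+κ))) ^ 2
  rw [← Real.rpow_natCast (t ^ (-((1:ℝ)/2+κ))) 2, ← Real.rpow_mul ht0.le]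
  norm_num; ring_nf


lemma sum_sq_le (a b : ℝ) : (a + b) ^ 2 ≤ 2 * a ^ 2 + 2 * b ^ 2 := by
  nlinarith [sq_nonneg (a - b)]

/-- Sup bound for the final boundary layer vertical component vanishing at `y = 0`:
for `0 < κ < 1/2` there is `C = C(κ)` such that
`‖v‖²_{L^∞} ≤ C ‖y^(1/2−κ) v'‖_{L²} ‖y^(1/2+κ) v'‖_{L²}`. -/
theorem final_layer_sup_bound (κ : ℝ) (hκ0 : 0 < κ) (hκ : κ < 1 / 2) :
    ∃ C : ℝ, 0 < C ∧ ∀ v v' : ℝ → ℝ,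
      (∀ y : ℝ, HasDerivAt v (v' y) y) → v 0 = 0 →
      MemLp (fun y => y ^ ((1 : ℝ) / 2 - κ) * v' y) 2 (volume.restrict (Ioi (0 : ℝ))) →
      MemLp (fun y => y ^ ((1 : ℝ) / 2 + κ) * v' y) 2 (volume.restrict (Ioi (0 : ℝ))) →
      ∀ y : ℝ, 0 ≤ y →
        (v y) ^ 2 ≤ C * Real.sqrt (∫ t in Ioi (0 : ℝ), (t ^ ((1 : ℝ) / 2 - κ) * v' t) ^ 2) *
          Real.sqrt (∫ t in Ioi (0 : ℝ), (t ^ ((1 : ℝ) / 2 + κ) * v' t) ^ 2) := by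
  refine ⟨2 / κ, by positivity, ?_⟩
  intro v v' hv hv0 hA hB y hy
  set A := ∫ t in Ioi (0:ℝ), (t ^ ((1 : ℝ) / 2 - κ) * v' t) ^ 2 with hA'
  set B := ∫ t in Ioi (0:ℝ), (t ^ ((1 : ℝ) / 2 + κ) * v' t) ^ 2 with hB'
  have hA0 : 0 ≤ A := hA' ▸ integral_nonneg fun t => sq_nonneg _
  have hB0 : 0 ≤ B := hB' ▸ integral_nonneg fun t => sq_nonneg _
  clear_value A B
  have hRHS0 : 0 ≤ 2 / κ * Real.sqrt A * Real.sqrt B := by positivity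
  -- degenerate case: v' = 0 a.e. on (0, ∞) implies v y = 0
  have hdeg : (∀ᵐ t ∂(volume.restrict (Ioi (0:ℝ))), v' t = 0) →
      (v y) ^ 2 ≤ 2 / κ * Real.sqrt A * Real.sqrt B := by
    intro hz
    have hz' : ∀ᵐ t ∂(volume.restrict (Ioc (0:ℝ) y)), v' t = 0 :=
      ae_restrict_of_ae_restrict_of_subset Ioc_subset_Ioi_self hz
    have hint : IntegrableOn v' (Ioc 0 y) volume :=
      (integrable_zero _ _ _).congr (hz'.mono fun t ht => ht.symm)
    have hii : IntervalIntegrable v' volume 0 y :=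
      ⟨hint, by rw [Ioc_eq_empty (not_lt.mpr hy)]; exact integrableOn_empty⟩
    have hftc := intervalIntegral.integral_eq_sub_of_hasDerivAt (fun t _ => hv t) hii
    have hz0 : ∫ t in (0:ℝ)..y, v' t = 0 := by
      rw [intervalIntegral.integral_of_le hy]
      exact integral_eq_zero_of_ae hz'
    have : v y = 0 := by rw [hv0] at hftc; rw [← hz0, hftc, sub_zero]
    rw [this]
    simpa using hRHS0
  -- if one of the integrals vanishes, v' = 0 a.e.
  have hv'zero : ∀ c : ℝ, MemLp (fun t : ℝ => t ^ c * v' t) 2 (volume.restrict (Ioi (0:ℝ))) →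
      (∫ t in Ioi (0:ℝ), (t ^ c * v' t) ^ 2) = 0 →
      ∀ᵐ t ∂(volume.restrict (Ioi (0:ℝ))), v' t = 0 := by
    intro c hm h0
    have hint := hm.integrable_sq
    have hz := (integral_eq_zero_iff_of_nonneg_ae
      (Filter.Eventually.of_forall fun t => sq_nonneg _) hint).mp h0
    filter_upwards [hz, ae_restrict_mem measurableSet_Ioi] with t h1 h2
    have htne : t ^ c ≠ 0 := ne_of_gt (Real.rpow_pos_of_pos h2 c)
    have h1' : (t ^ c * v' t) ^ 2 = 0 := h1
    have := pow_eq_zero_iff (n := 2) (by norm_num) |>.mp h1'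
    rcases mul_eq_zero.mp this with h | h
    · exact absurd h htne
    · exact h
  rcases eq_or_lt_of_le hA0 with hA0' | hApos
  · exact hdeg (hv'zero _ hA (hA'.symm.trans hA0'.symm))
  rcases eq_or_lt_of_le hB0 with hB0' | hBpos
  · exact hdeg (hv'zero _ hB (hB'.symm.trans hB0'.symm))
  -- main case
  have hsA : 0 < Real.sqrt A := Real.sqrt_pos.mpr hApos
  have hsB : 0 < Real.sqrt B := Real.sqrt_pos.mpr hBpos
  set T : ℝ := (Real.sqrt B / Real.sqrt A) ^ ((2*κ)⁻¹) with hTdef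
  have hTpos : 0 < T := Real.rpow_pos_of_pos (div_pos hsB hsA) _
  have hT1 : T ^ (2*κ) = Real.sqrt B / Real.sqrt A := by
    rw [hTdef, ← Real.rpow_mul (div_pos hsB hsA).le,
      inv_mul_cancel₀ (by positivity), Real.rpow_one]
  have hT2 : T ^ (-(2*κ)) = Real.sqrt A / Real.sqrt B := by
    rw [Real.rpow_neg hTpos.le, hT1, inv_div]
  clear_value T
  have hsub1 : Ioc (0:ℝ) T ⊆ Ioi 0 := Ioc_subset_Ioi_self
  have hsub2 : Ioi T ⊆ Ioi (0:ℝ) := Ioi_subset_Ioi hTpos.le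
  have hf1 : MemLp (fun t : ℝ => t ^ ((1:ℝ)/2 - κ) * v' t) 2 (volume.restrict (Ioc 0 T)) :=
    hA.mono_measure (Measure.restrict_mono hsub1 le_rfl)
  have hg2 : MemLp (fun t : ℝ => t ^ ((1:ℝ)/2 + κ) * v' t) 2 (volume.restrict (Ioi T)) :=
    hB.mono_measure (Measure.restrict_mono hsub2 le_rfl)
  obtain ⟨hi1, hle1⟩ := piece measurableSet_Ioc hsub1 ((1:ℝ)/2 - κ) (wmem1 hκ0 hκ hTpos) hf1
  obtain ⟨hi2, hle2⟩ := piece measurableSet_Ioi hsub2 ((1:ℝ)/2 + κ) (wmem2 hκ0 hTpos) hg2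
  -- bound the restricted square integrals by A and B
  have hAle : ∫ t in Ioc (0:ℝ) T, (t ^ ((1:ℝ)/2 - κ) * v' t) ^ 2 ≤ A := by
    rw [hA']
    exact setIntegral_mono_set hA.integrable_sq
      (Filter.Eventually.of_forall fun t => sq_nonneg _) hsub1.eventuallyLE
  have hBle : ∫ t in Ioi T, (t ^ ((1:ℝ)/2 + κ) * v' t) ^ 2 ≤ B := by
    rw [hB']
    exact setIntegral_mono_set hB.integrable_sq
      (Filter.Eventually.of_forall fun t => sq_nonneg _) hsub2.eventuallyLE
  have hle1' : ∫ t in Ioc (0:ℝ) T, |v' t| ≤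
      Real.sqrt (T ^ (2*κ) / (2*κ)) * Real.sqrt A := by
    calc ∫ t in Ioc (0:ℝ) T, |v' t| ≤ _ := hle1
      _ ≤ Real.sqrt (T ^ (2*κ) / (2*κ)) * Real.sqrt A := by
          rw [w1 hκ0 hκ hTpos]
          exact mul_le_mul_of_nonneg_left (Real.sqrt_le_sqrt hAle) (Real.sqrt_nonneg _)
  have hle2' : ∫ t in Ioi T, |v' t| ≤
      Real.sqrt (T ^ (-(2*κ)) / (2*κ)) * Real.sqrt B := by
    calc ∫ t in Ioi T, |v' t| ≤ _ := hle2
      _ ≤ Real.sqrt (T ^ (-(2*κ)) / (2*κ)) * Real.sqrt B := by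
          rw [w2 hκ0 hTpos]
          exact mul_le_mul_of_nonneg_left (Real.sqrt_le_sqrt hBle) (Real.sqrt_nonneg _)
  -- total integral on (0, ∞)
  have hIoi : IntegrableOn (fun t => |v' t|) (Ioi (0:ℝ)) volume := by
    rw [← Ioc_union_Ioi_eq_Ioi hTpos.le]
    exact hi1.union hi2
  have hsplit : ∫ t in Ioi (0:ℝ), |v' t| =
      (∫ t in Ioc (0:ℝ) T, |v' t|) + ∫ t in Ioi T, |v' t| := by
    rw [← Ioc_union_Ioi_eq_Ioi hTpos.le]
    exact setIntegral_union (Ioc_disjoint_Ioi le_rfl) measurableSet_Ioi hi1 hi2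
  have hmono : ∫ t in Ioc (0:ℝ) y, |v' t| ≤ ∫ t in Ioi (0:ℝ), |v' t| :=
    setIntegral_mono_set hIoi (Filter.Eventually.of_forall fun t => abs_nonneg _)
      Ioc_subset_Ioi_self.eventuallyLE
  -- FTC
  have hv'meas : Measurable v' := by
    have : v' = deriv v := funext fun t => ((hv t).deriv).symm
    rw [this]; exact measurable_deriv v
  have hIocy : IntegrableOn (fun t => |v' t|) (Ioc (0:ℝ) y) volume :=
    hIoi.mono_set Ioc_subset_Ioi_self
  have hIocy' : IntegrableOn v' (Ioc (0:ℝ) y) volume := by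
    have hnorm : Integrable (fun t => ‖v' t‖) (volume.restrict (Ioc (0:ℝ) y)) := by
      simpa [Real.norm_eq_abs, IntegrableOn] using hIocy
    exact (integrable_norm_iff (hv'meas.aestronglyMeasurable.restrict)).mp hnorm
  have hii : IntervalIntegrable v' volume 0 y :=
    ⟨hIocy', by rw [Ioc_eq_empty (not_lt.mpr hy)]; exact integrableOn_empty⟩
  have hftc := intervalIntegral.integral_eq_sub_of_hasDerivAt (fun t _ => hv t) hii
  have habs : |v y| ≤ ∫ t in Ioc (0:ℝ) y, |v' t| := by
    rw [hv0] at hftc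
    have h1 : v y = ∫ t in (0:ℝ)..y, v' t := by rw [hftc, sub_zero]
    rw [h1, ← intervalIntegral.integral_of_le hy]
    exact intervalIntegral.abs_integral_le_integral_abs hy
  -- combine
  set M1 := Real.sqrt (T ^ (2*κ) / (2*κ)) * Real.sqrt A with hM1
  set M2 := Real.sqrt (T ^ (-(2*κ)) / (2*κ)) * Real.sqrt B with hM2
  clear_value M1 M2
  have hvM : |v y| ≤ M1 + M2 := by
    calc |v y| ≤ ∫ t in Ioc (0:ℝ) y, |v' t| := habs
      _ ≤ ∫ t in Ioi (0:ℝ), |v' t| := hmono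
      _ = (∫ t in Ioc (0:ℝ) T, |v' t|) + ∫ t in Ioi T, |v' t| := hsplit
      _ ≤ M1 + M2 := add_le_add hle1' hle2'
  have hM10 : 0 ≤ M1 := hM1 ▸ mul_nonneg (Real.sqrt_nonneg _) (Real.sqrt_nonneg _)
  have hM20 : 0 ≤ M2 := hM2 ▸ mul_nonneg (Real.sqrt_nonneg _) (Real.sqrt_nonneg _)
  have hsq : (v y) ^ 2 ≤ (M1 + M2) ^ 2 := by
    rw [← sq_abs]
    exact pow_le_pow_left₀ (abs_nonneg _) hvM 2
  have hk2 : (0:ℝ) < 2*κ := by linarith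
  have hM1sq : M1 ^ 2 = (T ^ (2*κ) / (2*κ)) * A := by
    rw [hM1, mul_pow,
      Real.sq_sqrt (div_nonneg (Real.rpow_pos_of_pos hTpos _).le hk2.le),
      Real.sq_sqrt hA0]
  have hM2sq : M2 ^ 2 = (T ^ (-(2*κ)) / (2*κ)) * B := by
    rw [hM2, mul_pow,
      Real.sq_sqrt (div_nonneg (Real.rpow_pos_of_pos hTpos _).le hk2.le),
      Real.sq_sqrt hB0]
  have hAB : A = Real.sqrt A ^ 2 := (Real.sq_sqrt hA0).symm
  have hBB : B = Real.sqrt B ^ 2 := (Real.sq_sqrt hB0).symm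
  have h3 : 2 * M1 ^ 2 + 2 * M2 ^ 2 = 2 / κ * Real.sqrt A * Real.sqrt B := by
    rw [hM1sq, hM2sq, hT1, hT2]
    field_simp
    linear_combination (Real.sqrt B^2) * hAB + (Real.sqrt A^2) * hBB
  calc (v y) ^ 2 ≤ (M1 + M2) ^ 2 := hsq
    _ ≤ 2 * M1 ^ 2 + 2 * M2 ^ 2 := sum_sq_le M1 M2
    _ = 2 / κ * Real.sqrt A * Real.sqrt B := h3
end
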